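/- There exists a constant C > 0 such that for every η ∈ (0, π/2] the following four quantities are well defined and bounded by C: (i) 1 + (Λᵒ(η)/Λᵃ(η))·W₁(Λᵃ(η))/W₁(Λᵒ(η)); (ii) 1 + W₁(Λᵃ(η))/W₁(Λᵒ(η)); (iii) (1 + W₁(Λᵃ(π−η))/W₁(Λᵒ(π−η)))·W₃(Λᵃ(π−η))/W₃(Λᵃ(η)); (iv) (Λᵃ(π−η)/Λᵃ(η))·(1 + (Λᵒ(π−η)/Λᵃ(π−η))·W₁(Λᵃ(π−η))/W₁(Λᵒ(π−η)))·W₃(Λᵃ(π−η))/W₃(Λᵃ(η)). -/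

import Mathlib

open Real

noncomputable def Delta (η : ℝ) : ℝ :=
  1 + 268 * Real.cos (η / 2) ^ 2 - 44 * Real.cos (η / 2) ^ 4

noncomputable def Lama (η : ℝ) : ℝ :=
  120 * Real.sin (η / 2) ^ 2 / (11 + 4 * Real.cos (η / 2) ^ 2 + Real.sqrt (Delta η))

noncomputable def Lamo (η : ℝ) : ℝ :=
  (22 + 8 * Real.cos (η / 2) ^ 2 + 2 * Real.sqrt (Delta η)) / (1 + Real.sin (η / 2) ^ 2)

noncomputable def W1 (Λ : ℝ) : ℝ :=
  Λ ^ 2 * (Λ ^ 2 + 16 * Λ + 240) / ((Λ - 10) * (19 * Λ ^ 2 + 120 * Λ - 3600))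

noncomputable def W3 (Λ : ℝ) : ℝ :=
  (60 - Λ) ^ 2 * (Λ - 10) ^ 3 * (Λ - 12) ^ 2 /
    ((19 * Λ ^ 2 + 120 * Λ - 3600) * (Λ ^ 2 + 16 * Λ + 240) ^ 3)

/-! ### Auxiliary absolute-value estimates -/

lemma absMul {x y X Y : ℝ} (hx : |x| ≤ X) (hy : |y| ≤ Y) : |x*y| ≤ X*Y := by
  rw [abs_mul]
  exact mul_le_mul hx hy (abs_nonneg _) ((abs_nonneg x).trans hx)

lemma absPow {x X : ℝ} (hx : |x| ≤ X) (n : ℕ) : |x^n| ≤ X^n := by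
  rw [abs_pow]
  exact pow_le_pow_left₀ (abs_nonneg x) hx n

lemma absMulLow {x y X Y : ℝ} (hX : 0 ≤ X) (hY : 0 ≤ Y) (hx : X ≤ |x|) (hy : Y ≤ |y|) :
    X*Y ≤ |x*y| := by
  rw [abs_mul]
  exact mul_le_mul hx hy hY (abs_nonneg x)

lemma absPowLow {x X : ℝ} (hX : 0 ≤ X) (hx : X ≤ |x|) (n : ℕ) : X^n ≤ |x^n| := by
  rw [abs_pow]
  exact pow_le_pow_left₀ hX hx n

lemma absDivLe {x y X Y : ℝ} (hx : |x| ≤ X) (hY : 0 < Y) (hy : Y ≤ |y|) : |x/y| ≤ X/Y := by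
  rw [abs_div]
  exact div_le_div₀ ((abs_nonneg x).trans hx) hx hY hy

lemma absDivLow {x y X Y : ℝ} (hX : 0 ≤ X) (hx : X ≤ |x|) (hy : |y| ≤ Y) (hy0 : y ≠ 0) :
    X/Y ≤ |x/y| := by
  rw [abs_div]
  exact div_le_div₀ (abs_nonneg x) hx (abs_pos.mpr hy0) hy

/-! ### Algebraic identities -/

lemma key1 (a o : ℝ) (ha : a ≠ 0) (ha10 : a - 10 ≠ 0)
    (hQa : 19*a^2+120*a-3600 ≠ 0) (hPa : a^2+16*a+240 ≠ 0)
    (ho : o ≠ 0) (ho10 : o - 10 ≠ 0)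
    (hQo : 19*o^2+120*o-3600 ≠ 0) (hPo : o^2+16*o+240 ≠ 0) :
    1 + (o/a) * (W1 a / W1 o)
      = 1 + a*(a^2+16*a+240)*(o-10)*(19*o^2+120*o-3600)
          / (o*(a-10)*(19*a^2+120*a-3600)*(o^2+16*o+240)) := by
  unfold W1
  rw [div_div_div_comm]
  field_simp

lemma key2 (a o : ℝ) (ha10 : a - 10 ≠ 0)
    (hQa : 19*a^2+120*a-3600 ≠ 0) (hPa : a^2+16*a+240 ≠ 0)
    (ho : o ≠ 0) (ho10 : o - 10 ≠ 0)
    (hQo : 19*o^2+120*o-3600 ≠ 0) (hPo : o^2+16*o+240 ≠ 0) :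
    1 + W1 a / W1 o
      = 1 + a^2*(a^2+16*a+240)*(o-10)*(19*o^2+120*o-3600)
          / ((a-10)*(19*a^2+120*a-3600)*o^2*(o^2+16*o+240)) := by
  unfold W1
  rw [div_div_div_comm]
  field_simp

lemma split3 (u v w s : ℝ) : (1 + u/v)*(w/s) = (w + (u*w)/v)/s := by ring

lemma split4 (a b c u v w s : ℝ) (hb : b ≠ 0) :
    (b/a)*(1 + (c/b)*(u/v))*(w/s) = ((b/a)*w + (c/a)*((u*w)/v))/s := by
  have hbc : (b/a)*(c/b) = c/a := by
    rw [div_mul_div_comm, mul_comm a b]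
    exact mul_div_mul_left c a hb
  rw [mul_add, mul_one, ← mul_assoc, hbc]
  ring

lemma keyC (b : ℝ) (hb10 : b - 10 ≠ 0) (hQb : 19*b^2+120*b-3600 ≠ 0)
    (hPb : b^2+16*b+240 ≠ 0) :
    W1 b * W3 b
      = b^2*(60-b)^2*(b-10)^2*(b-12)^2/((19*b^2+120*b-3600)^2*(b^2+16*b+240)^2) := by
  unfold W1 W3
  field_simp

lemma keyD (b c : ℝ) (hc : c ≠ 0) (hc10 : c - 10 ≠ 0)
    (hQc : 19*c^2+120*c-3600 ≠ 0) (hPc : c^2+16*c+240 ≠ 0)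
    (hQb : 19*b^2+120*b-3600 ≠ 0) (hPb : b^2+16*b+240 ≠ 0) :
    (b^2*(60-b)^2*(b-10)^2*(b-12)^2/((19*b^2+120*b-3600)^2*(b^2+16*b+240)^2)) / W1 c
      = (c-10)*(19*c^2+120*c-3600)*b^2*(60-b)^2*(b-10)^2*(b-12)^2
          / (c^2*(c^2+16*c+240)*(19*b^2+120*b-3600)^2*(b^2+16*b+240)^2) := by
  unfold W1
  field_simp

lemma keyA (a b K : ℝ) (ha : a ≠ 0) (hK : b - 10 = K*a)
    (hQb : 19*b^2+120*b-3600 ≠ 0) (hPb : b^2+16*b+240 ≠ 0) :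
    (b/a) * W3 b
      = K^3*a^2*b*(60-b)^2*(b-12)^2/((19*b^2+120*b-3600)*(b^2+16*b+240)^3) := by
  unfold W3
  have h3 : (b-10)^3 = K^3*a^3 := by rw [hK]; ring
  rw [h3]
  field_simp

lemma keyB' (a b c K : ℝ) (ha : a ≠ 0) (hK : b - 10 = K*a)
    (hc : c ≠ 0) (hc10 : c - 10 ≠ 0)
    (hQc : 19*c^2+120*c-3600 ≠ 0) (hPc : c^2+16*c+240 ≠ 0)
    (hQb : 19*b^2+120*b-3600 ≠ 0) (hPb : b^2+16*b+240 ≠ 0) :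
    (c/a) * ((b^2*(60-b)^2*(b-10)^2*(b-12)^2
        /((19*b^2+120*b-3600)^2*(b^2+16*b+240)^2)) / W1 c)
      = K^2*a*(c-10)*(19*c^2+120*c-3600)*b^2*(60-b)^2*(b-12)^2
          / (c*(c^2+16*c+240)*(19*b^2+120*b-3600)^2*(b^2+16*b+240)^2) := by
  unfold W1
  have h2 : (b-10)^2 = K^2*a^2 := by rw [hK]; ring
  rw [h2]
  field_simp


lemma polyA {x : ℝ} (h0 : 0 < x) (h1 : x ≤ 5/2) :
    19*x^2+120*x-3600 ≤ -3000 ∧ -3600 ≤ 19*x^2+120*x-3600 ∧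
    x^2+16*x+240 ≤ 300 ∧ 240 ≤ x^2+16*x+240 :=
  ⟨by nlinarith, by nlinarith, by nlinarith, by nlinarith⟩

lemma polyB {x : ℝ} (h0 : 2 ≤ x) (h1 : x ≤ 10) :
    19*x^2+120*x-3600 ≤ -500 ∧ -3600 ≤ 19*x^2+120*x-3600 ∧ 240 ≤ x^2+16*x+240 :=
  ⟨by nlinarith, by nlinarith, by nlinarith⟩

lemma polyO {x : ℝ} (h0 : 32 ≤ x) (h1 : x ≤ 60) :
    0 < 19*x^2+120*x-3600 ∧ 19*x^2+120*x-3600 ≤ 72000 ∧ 240 ≤ x^2+16*x+240 :=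
  ⟨by nlinarith, by nlinarith, by nlinarith⟩

lemma polyC {x : ℝ} (h0 : 12 ≤ x) (h1 : x ≤ 34) :
    500 ≤ 19*x^2+120*x-3600 ∧ 19*x^2+120*x-3600 ≤ 23000 ∧ 240 ≤ x^2+16*x+240 :=
  ⟨by nlinarith, by nlinarith, by nlinarith⟩

set_option maxHeartbeats 1600000 in
theorem stmt_15 :
    ∃ C > (0 : ℝ), ∀ η ∈ Set.Ioc (0 : ℝ) (Real.pi / 2),
      Lama η ≠ 0 ∧ Lama (Real.pi - η) ≠ 0 ∧
      W1 (Lamo η) ≠ 0 ∧ W1 (Lamo (Real.pi - η)) ≠ 0 ∧ W3 (Lama η) ≠ 0 ∧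
      |1 + (Lamo η / Lama η) * (W1 (Lama η) / W1 (Lamo η))| ≤ C ∧
      |1 + W1 (Lama η) / W1 (Lamo η)| ≤ C ∧
      |(1 + W1 (Lama (Real.pi - η)) / W1 (Lamo (Real.pi - η)))
          * (W3 (Lama (Real.pi - η)) / W3 (Lama η))| ≤ C ∧
      |(Lama (Real.pi - η) / Lama η)
          * (1 + (Lamo (Real.pi - η) / Lama (Real.pi - η))
              * (W1 (Lama (Real.pi - η)) / W1 (Lamo (Real.pi - η))))
          * (W3 (Lama (Real.pi - η)) / W3 (Lama η))| ≤ C := by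
  refine ⟨10^30, by norm_num, ?_⟩
  rintro η ⟨hη0, hη2⟩
  have hπ := Real.pi_pos
  set t := Real.sin (η/2)^2 with ht
  have hsinpos : 0 < Real.sin (η/2) :=
    Real.sin_pos_of_pos_of_lt_pi (by linarith) (by linarith)
  have ht0 : 0 < t := pow_pos hsinpos 2
  have hcosη : 0 ≤ Real.cos η := Real.cos_nonneg_of_mem_Icc ⟨by linarith, hη2⟩
  have hct : Real.cos η = 1 - 2*t := by
    have h := Real.cos_sq (η/2)
    rw [show 2*(η/2) = η by ring] at h
    have h2 : Real.sin (η/2)^2 = 1 - Real.cos (η/2)^2 := Real.sin_sq (η/2)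
    rw [ht, h2, h]; ring
  have ht12 : t ≤ 1/2 := by linarith
  set rA := Real.sqrt (225 - 180*t - 44*t^2) with hrAdef
  have hrA2 : rA^2 = 225 - 180*t - 44*t^2 := Real.sq_sqrt (by nlinarith)
  have hrA0 : 0 ≤ rA := Real.sqrt_nonneg _
  have hrAl : 11 ≤ rA := by nlinarith
  have hrAu : rA ≤ 15 := by nlinarith
  set rO := Real.sqrt (1 + 268*t - 44*t^2) with hrOdef
  have hrO2 : rO^2 = 1 + 268*t - 44*t^2 := Real.sq_sqrt (by nlinarith)
  have hrO0 : 0 ≤ rO := Real.sqrt_nonneg _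
  have hrOl : 1 ≤ rO := by nlinarith
  have hrOu : rO ≤ 12 := by nlinarith
  have hcos2 : Real.cos (η/2)^2 = 1 - t := by rw [Real.cos_sq', ← ht]
  have hD1 : Delta η = 225 - 180*t - 44*t^2 := by
    unfold Delta
    linear_combination (268 - 44*(Real.cos (η/2)^2 + (1-t))) * hcos2
  have e1 : Real.sin ((π-η)/2) = Real.cos (η/2) := by
    rw [show (π-η)/2 = π/2 - η/2 by ring, Real.sin_pi_div_two_sub]
  have e2 : Real.cos ((π-η)/2) = Real.sin (η/2) := by
    rw [show (π-η)/2 = π/2 - η/2 by ring, Real.cos_pi_div_two_sub]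
  have hD2 : Delta (π-η) = 1 + 268*t - 44*t^2 := by
    unfold Delta
    rw [e2]
    linear_combination (268 - 44*(Real.sin (η/2)^2 + t)) * ht.symm
  have hA : Lama η = 120*t/(15 - 4*t + rA) := by
    unfold Lama
    rw [hD1, ← hrAdef, hcos2, ← ht]
    rw [show (11:ℝ)+4*(1-t)+rA = 15-4*t+rA by ring]
  have hB : Lama (π-η) = 120*(1-t)/(11 + 4*t + rO) := by
    unfold Lama
    rw [hD2, ← hrOdef, e1, e2, hcos2, ← ht]
  have hO : Lamo η = (30 - 8*t + 2*rA)/(1+t) := by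
    unfold Lamo
    rw [hD1, ← hrAdef, hcos2, ← ht]
    rw [show (22:ℝ)+8*(1-t)+2*rA = 30-8*t+2*rA by ring]
  have hC : Lamo (π-η) = (22 + 8*t + 2*rO)/(2-t) := by
    unfold Lamo
    rw [hD2, ← hrOdef, e1, e2, hcos2, ← ht]
    rw [show (1:ℝ)+(1-t) = 2-t by ring]
  set a := Lama η with haDef
  set b := Lama (π-η) with hbDef
  set o := Lamo η with hoDef
  set c := Lamo (π-η) with hcDef
  -- interval bounds for a
  have hDa : (24:ℝ) ≤ 15 - 4*t + rA := by linarith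
  have hDa' : 15 - 4*t + rA ≤ 30 := by linarith
  have haM : a*(15 - 4*t + rA) = 120*t := by
    rw [hA, div_mul_cancel₀ _ (show 15-4*t+rA ≠ 0 from ne_of_gt (by linarith))]
  have hapos : 0 < a := by rw [hA]; exact div_pos (by linarith) (by linarith)
  have haU : a ≤ 5/2 := by
    have h := mul_le_mul_of_nonneg_left hDa hapos.le
    linarith
  have haL : 4*t ≤ a := by
    have h := mul_le_mul_of_nonneg_left hDa' hapos.le
    linarith
  -- interval bounds for b
  have hDb : (12:ℝ) ≤ 11 + 4*t + rO := by linarith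
  have hDb' : 11 + 4*t + rO ≤ 25 := by linarith
  have hbM : b*(11 + 4*t + rO) = 120*(1-t) := by
    rw [hB, div_mul_cancel₀ _ (show 11+4*t+rO ≠ 0 from ne_of_gt (by linarith))]
  have hbpos : 0 < b := by rw [hB]; exact div_pos (by linarith) (by linarith)
  have hbU : b ≤ 10 := by
    have h := mul_le_mul_of_nonneg_left hDb hbpos.le
    linarith
  have hbL : 2 ≤ b := by
    have h := mul_le_mul_of_nonneg_left hDb' hbpos.le
    linarith
  have hb10M : (b-10)*(11+4*t+rO) = 10 - 160*t - 10*rO := by linear_combination hbM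
  have hrO1 : rO ≤ 1 + 134*t := by
    have hsq : (1+134*t)^2 - (1+268*t-44*t^2) = 18000*t^2 := by ring
    rw [hrOdef]
    calc Real.sqrt (1+268*t-44*t^2) ≤ Real.sqrt ((1+134*t)^2) :=
          Real.sqrt_le_sqrt (by linarith [sq_nonneg t])
      _ = 1+134*t := Real.sqrt_sq (by linarith)
  have hb10neg : b - 10 < 0 := by
    by_contra h
    push_neg at h
    have h2 : 0 ≤ (b-10)*(11+4*t+rO) := mul_nonneg (by linarith) (by linarith)
    rw [hb10M] at h2
    linarith
  have hb10ge : -200*t ≤ b - 10 := by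
    have key : (b-10)*(11+4*t+rO) ≤ (b-10)*12 :=
      mul_le_mul_of_nonpos_left hDb hb10neg.le
    rw [hb10M] at key
    linarith
  -- interval bounds for o
  have hoM : o*(1+t) = 30 - 8*t + 2*rA := by
    rw [hO, div_mul_cancel₀ _ (show 1+t ≠ 0 from ne_of_gt (by linarith))]
  have hopos : 0 < o := by rw [hO]; exact div_pos (by linarith) (by linarith)
  have hoL : 32 ≤ o := by
    have h := mul_le_mul_of_nonneg_left (show 1+t ≤ 3/2 by linarith) hopos.le
    linarith
  have hoU : o ≤ 60 := by
    have h := mul_le_mul_of_nonneg_left (show (1:ℝ) ≤ 1+t by linarith) hopos.le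
    linarith
  -- interval bounds for c
  have hcM : c*(2-t) = 22 + 8*t + 2*rO := by
    rw [hC, div_mul_cancel₀ _ (show 2-t ≠ 0 from ne_of_gt (by linarith))]
  have hcpos : 0 < c := by rw [hC]; exact div_pos (by linarith) (by linarith)
  have hcL : 12 ≤ c := by
    have h := mul_le_mul_of_nonneg_left (show 2-t ≤ 2 by linarith) hcpos.le
    linarith
  have hcU : c ≤ 34 := by
    have h := mul_le_mul_of_nonneg_left (show (3:ℝ)/2 ≤ 2-t by linarith) hcpos.le
    linarith
  -- the constant K
  set K := (b - 10)/a with hKdef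
  have hKa : b - 10 = K*a := by rw [hKdef]; field_simp
  have hKneg : K < 0 := div_neg_of_neg_of_pos hb10neg hapos
  have hKge : -50 ≤ K := by
    rw [hKdef, le_div_iff₀ hapos]
    linarith
  -- nonzero facts
  have hane : a ≠ 0 := ne_of_gt hapos
  have hbne : b ≠ 0 := ne_of_gt hbpos
  have hone : o ≠ 0 := ne_of_gt hopos
  have hcne : c ≠ 0 := ne_of_gt hcpos
  have ha10 : a - 10 ≠ 0 := ne_of_lt (by linarith)
  have hb10 : b - 10 ≠ 0 := ne_of_lt hb10neg
  have ho10 : o - 10 ≠ 0 := ne_of_gt (by linarith)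
  have hc10 : c - 10 ≠ 0 := ne_of_gt (by linarith)
  have ha60 : (60:ℝ) - a ≠ 0 := ne_of_gt (by linarith)
  have ha12 : a - 12 ≠ 0 := ne_of_lt (by linarith)
  obtain ⟨hQaneg, hQalow, hPaB, hPaL⟩ := polyA hapos haU
  have hQa : 19*a^2+120*a-3600 ≠ 0 := ne_of_lt (by linarith)
  have hPa : a^2+16*a+240 ≠ 0 := ne_of_gt (by linarith)
  obtain ⟨hQbneg, hQblow, hPbL⟩ := polyB hbL hbU
  have hQb : 19*b^2+120*b-3600 ≠ 0 := ne_of_lt (by linarith)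
  have hPb : b^2+16*b+240 ≠ 0 := ne_of_gt (by linarith)
  obtain ⟨hQopos, hQoB, hPoL⟩ := polyO hoL hoU
  have hQo : 19*o^2+120*o-3600 ≠ 0 := ne_of_gt hQopos
  have hPo : o^2+16*o+240 ≠ 0 := ne_of_gt (by linarith)
  obtain ⟨hQcpos, hQcB, hPcL⟩ := polyC hcL hcU
  have hQc : 19*c^2+120*c-3600 ≠ 0 := ne_of_gt (by linarith)
  have hPc : c^2+16*c+240 ≠ 0 := ne_of_gt (by linarith)
  -- W nonzero
  have hW1oval : W1 o = o^2*(o^2+16*o+240)/((o-10)*(19*o^2+120*o-3600)) := rfl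
  have hW1o : W1 o ≠ 0 := by
    rw [hW1oval]
    exact div_ne_zero (mul_ne_zero (pow_ne_zero 2 hone) hPo) (mul_ne_zero ho10 hQo)
  have hW1cval : W1 c = c^2*(c^2+16*c+240)/((c-10)*(19*c^2+120*c-3600)) := rfl
  have hW1c : W1 c ≠ 0 := by
    rw [hW1cval]
    exact div_ne_zero (mul_ne_zero (pow_ne_zero 2 hcne) hPc) (mul_ne_zero hc10 hQc)
  have hW3aval : W3 a
      = (60-a)^2*(a-10)^3*(a-12)^2/((19*a^2+120*a-3600)*(a^2+16*a+240)^3) := rfl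
  have hW3a : W3 a ≠ 0 := by
    rw [hW3aval]
    exact div_ne_zero
      (mul_ne_zero (mul_ne_zero (pow_ne_zero 2 ha60) (pow_ne_zero 3 ha10))
        (pow_ne_zero 2 ha12))
      (mul_ne_zero hQa (pow_ne_zero 3 hPa))
  -- absolute value facts
  have absa : |a| ≤ 3 := by rw [abs_of_pos hapos]; linarith
  have absPa : |a^2+16*a+240| ≤ 300 := by rw [abs_of_pos (by linarith)]; linarith
  have abso10 : |o-10| ≤ 50 := by rw [abs_of_pos (by linarith)]; linarith
  have absQo : |19*o^2+120*o-3600| ≤ 72000 := by rw [abs_of_pos hQopos]; linarith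
  have lowo : (32:ℝ) ≤ |o| := by rw [abs_of_pos hopos]; linarith
  have lowa10 : (7:ℝ) ≤ |a-10| := by rw [abs_of_neg (by linarith)]; linarith
  have lowQa : (3000:ℝ) ≤ |19*a^2+120*a-3600| := by
    rw [abs_of_neg (by linarith)]; linarith
  have absQa : |19*a^2+120*a-3600| ≤ 3600 := by
    rw [abs_of_neg (by linarith)]; linarith
  have lowPo : (240:ℝ) ≤ |o^2+16*o+240| := by rw [abs_of_pos (by linarith)]; linarith
  have absb : |b| ≤ 10 := by rw [abs_of_pos hbpos]; linarith
  have absb60 : |60-b| ≤ 60 := by rw [abs_of_pos (by linarith)]; linarith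
  have absb10 : |b-10| ≤ 10 := by rw [abs_of_neg hb10neg]; linarith
  have absb12 : |b-12| ≤ 12 := by rw [abs_of_neg (by linarith)]; linarith
  have absc10 : |c-10| ≤ 24 := by rw [abs_of_pos (by linarith)]; linarith
  have absQc : |19*c^2+120*c-3600| ≤ 23000 := by
    rw [abs_of_pos (by linarith)]; linarith
  have lowc : (12:ℝ) ≤ |c| := by rw [abs_of_pos hcpos]; linarith
  have lowPc : (240:ℝ) ≤ |c^2+16*c+240| := by rw [abs_of_pos (by linarith)]; linarith
  have lowQc : (500:ℝ) ≤ |19*c^2+120*c-3600| := by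
    rw [abs_of_pos (by linarith)]; linarith
  have lowQb : (500:ℝ) ≤ |19*b^2+120*b-3600| := by
    rw [abs_of_neg (by linarith)]; linarith
  have lowPb : (240:ℝ) ≤ |b^2+16*b+240| := by rw [abs_of_pos (by linarith)]; linarith
  have absK : |K| ≤ 50 := by rw [abs_of_neg hKneg]; linarith
  have lowa60 : (57:ℝ) ≤ |60-a| := by rw [abs_of_pos (by linarith)]; linarith
  have lowa12 : (9:ℝ) ≤ |a-12| := by rw [abs_of_neg (by linarith)]; linarith
  -- W3 a from below, W3 b from above
  have lowW3a : ((57^2*7^3*9^2 : ℝ)/(3600*300^3)) ≤ |W3 a| := by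
    rw [hW3aval]
    exact absDivLow (by norm_num)
      (absMulLow (by norm_num) (by norm_num)
        (absMulLow (by norm_num) (by norm_num)
          (absPowLow (by norm_num) lowa60 2) (absPowLow (by norm_num) lowa10 3))
        (absPowLow (by norm_num) lowa12 2))
      (absMul absQa (absPow absPa 3))
      (mul_ne_zero hQa (pow_ne_zero 3 hPa))
  have hW3bval : W3 b
      = (60-b)^2*(b-10)^3*(b-12)^2/((19*b^2+120*b-3600)*(b^2+16*b+240)^3) := rfl
  have absW3b : |W3 b| ≤ (60^2*10^3*12^2 : ℝ)/(500*240^3) := by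
    rw [hW3bval]
    exact absDivLe
      (absMul (absMul (absPow absb60 2) (absPow absb10 3)) (absPow absb12 2))
      (by norm_num)
      (absMulLow (by norm_num) (by norm_num) lowQb (absPowLow (by norm_num) lowPb 3))
  refine ⟨hane, hbne, hW1o, hW1c, hW3a, ?_, ?_, ?_, ?_⟩
  · -- (i)
    rw [key1 a o hane ha10 hQa hPa hone ho10 hQo hPo]
    refine le_trans (abs_add_le 1 _) ?_
    rw [abs_one]
    have h1 : |a*(a^2+16*a+240)*(o-10)*(19*o^2+120*o-3600)|
        ≤ 3*300*50*72000 := absMul (absMul (absMul absa absPa) abso10) absQo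
    have h2 : ((32*7*3000*240:ℝ)) ≤ |o*(a-10)*(19*a^2+120*a-3600)*(o^2+16*o+240)| :=
      absMulLow (by norm_num) (by norm_num)
        (absMulLow (by norm_num) (by norm_num)
          (absMulLow (by norm_num) (by norm_num) lowo lowa10) lowQa) lowPo
    have h3 := absDivLe h1 (by norm_num) h2
    exact le_trans (add_le_add_right h3 1) (by norm_num)
  · -- (ii)
    rw [key2 a o ha10 hQa hPa hone ho10 hQo hPo]
    refine le_trans (abs_add_le 1 _) ?_
    rw [abs_one]
    have h1 : |a^2*(a^2+16*a+240)*(o-10)*(19*o^2+120*o-3600)|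
        ≤ 3^2*300*50*72000 :=
      absMul (absMul (absMul (absPow absa 2) absPa) abso10) absQo
    have h2 : ((7*3000*32^2*240:ℝ))
        ≤ |(a-10)*(19*a^2+120*a-3600)*o^2*(o^2+16*o+240)| :=
      absMulLow (by norm_num) (by norm_num)
        (absMulLow (by norm_num) (by norm_num)
          (absMulLow (by norm_num) (by norm_num) lowa10 lowQa)
          (absPowLow (by norm_num) lowo 2)) lowPo
    have h3 := absDivLe h1 (by norm_num) h2
    exact le_trans (add_le_add_right h3 1) (by norm_num)
  · -- (iii)
    rw [split3, keyC b hb10 hQb hPb, keyD b c hcne hc10 hQc hPc hQb hPb]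
    have hS2 : |(c-10)*(19*c^2+120*c-3600)*b^2*(60-b)^2*(b-10)^2*(b-12)^2
        / (c^2*(c^2+16*c+240)*(19*b^2+120*b-3600)^2*(b^2+16*b+240)^2)|
        ≤ (24*23000*10^2*60^2*10^2*12^2 : ℝ)/(12^2*240*500^2*240^2) := by
      refine absDivLe ?_ (by norm_num) ?_
      · exact absMul (absMul (absMul (absMul (absMul absc10 absQc)
          (absPow absb 2)) (absPow absb60 2)) (absPow absb10 2)) (absPow absb12 2)
      · exact absMulLow (by norm_num) (by norm_num)
          (absMulLow (by norm_num) (by norm_num)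
            (absMulLow (by norm_num) (by norm_num)
              (absPowLow (by norm_num) lowc 2) lowPc)
            (absPowLow (by norm_num) lowQb 2))
          (absPowLow (by norm_num) lowPb 2)
    have hsum := le_trans (abs_add_le (W3 b) _) (add_le_add absW3b hS2)
    have hq := absDivLe hsum (show (0:ℝ) < (57^2*7^3*9^2 : ℝ)/(3600*300^3) by norm_num)
      lowW3a
    refine le_trans hq ?_
    norm_num
  · -- (iv)
    rw [split4 a b c (W1 b) (W1 c) (W3 b) (W3 a) hbne,
      keyA a b K hane hKa hQb hPb, keyC b hb10 hQb hPb,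
      keyB' a b c K hane hKa hcne hc10 hQc hPc hQb hPb]
    have hT1 : |K^3*a^2*b*(60-b)^2*(b-12)^2
        /((19*b^2+120*b-3600)*(b^2+16*b+240)^3)|
        ≤ (50^3*3^2*10*60^2*12^2 : ℝ)/(500*240^3) := by
      refine absDivLe ?_ (by norm_num) ?_
      · exact absMul (absMul (absMul (absMul (absPow absK 3) (absPow absa 2)) absb)
          (absPow absb60 2)) (absPow absb12 2)
      · exact absMulLow (by norm_num) (by norm_num) lowQb
          (absPowLow (by norm_num) lowPb 3)
    have hT2 : |K^2*a*(c-10)*(19*c^2+120*c-3600)*b^2*(60-b)^2*(b-12)^2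
        / (c*(c^2+16*c+240)*(19*b^2+120*b-3600)^2*(b^2+16*b+240)^2)|
        ≤ (50^2*3*24*23000*10^2*60^2*12^2 : ℝ)/(12*240*500^2*240^2) := by
      refine absDivLe ?_ (by norm_num) ?_
      · exact absMul (absMul (absMul (absMul (absMul (absMul
          (absPow absK 2) absa) absc10) absQc) (absPow absb 2))
          (absPow absb60 2)) (absPow absb12 2)
      · exact absMulLow (by norm_num) (by norm_num)
          (absMulLow (by norm_num) (by norm_num)
            (absMulLow (by norm_num) (by norm_num) lowc lowPc)
            (absPowLow (by norm_num) lowQb 2))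
          (absPowLow (by norm_num) lowPb 2)
    have hsum := le_trans (abs_add_le _ _) (add_le_add hT1 hT2)
    have hq := absDivLe hsum (show (0:ℝ) < (57^2*7^3*9^2 : ℝ)/(3600*300^3) by norm_num)
      lowW3a
    refine le_trans hq ?_
    norm_num
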